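/- Every normal distribution constraint is satisfiable: if C = ((μ^R)_{∅≠R⊆[n]}, ([t_j,T_j])_{j=1}^n) is a distribution constraint such that for every nonempty S ⊆ {1,…,n} both t_C(S) ≤ M_C(S) and m_C(S) ≤ T_C(S), then there exist nonnegative reals (μ_j^R)_{j∈[n], ∅≠R⊆[n]} with μ_j^R = 0 for j ∉ R and Σ_{j∈R} μ_j^R = μ^R for every nonempty R, and with t_j ≤ Σ_{∅≠R⊆[n]} μ_j^R ≤ T_j for every j ∈ {1,…,n}. -/

import Mathlib

open scoped NNReal
open Finset

namespace NCSat

variable {n : ℕ}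

def Valid (μ : Finset (Fin n) → ℝ) (q : Finset (Fin n) → Fin n → ℝ) : Prop :=
  (∀ R j, 0 ≤ q R j) ∧ (∀ R j, j ∉ R → q R j = 0) ∧
    ∀ R : Finset (Fin n), R.Nonempty → ∑ j ∈ R, q R j = μ R

def load (q : Finset (Fin n) → Fin n → ℝ) (j : Fin n) : ℝ :=
  ∑ R : Finset (Fin n), q R j

lemma pert (μ : Finset (Fin n) → ℝ) (q : Finset (Fin n) → Fin n → ℝ) (hq : Valid μ q)
    (a b : Fin n)
    (hab : Relation.ReflTransGen (fun x y => ∃ R, x ∈ R ∧ 0 < q R y) a b) :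
    ∃ k : ℕ, ∀ ε : ℝ, 0 < ε → (∀ R j, 0 < q R j → (k : ℝ) * ε ≤ q R j) →
      ∃ q', Valid μ q' ∧
        ∀ j, load q' j = load q j + (if j = a then ε else 0) - (if j = b then ε else 0) := by
  obtain ⟨hpos, hsupp, hsum⟩ := hq
  -- strengthen with closeness invariant
  suffices h : ∃ k : ℕ, ∀ ε : ℝ, 0 < ε → (∀ R j, 0 < q R j → (k : ℝ) * ε ≤ q R j) →
      ∃ q', Valid μ q' ∧ (∀ R j, q R j - (k : ℝ) * ε ≤ q' R j) ∧
        ∀ j, load q' j = load q j + (if j = a then ε else 0) - (if j = b then ε else 0) by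
    obtain ⟨k, hk⟩ := h
    exact ⟨k, fun ε hε hs => (hk ε hε hs).imp fun q' h => ⟨h.1, h.2.2⟩⟩
  induction hab with
  | refl =>
      refine ⟨0, fun ε hε _ => ⟨q, ⟨hpos, hsupp, hsum⟩, by simp, fun j => by simp⟩⟩
  | @tail b c hab hstep ih =>
      obtain ⟨R, hbR, hRc⟩ := hstep
      obtain ⟨k, hk⟩ := ih
      refine ⟨k + 1, fun ε hε hsmall => ?_⟩
      have hk1 : ((k : ℝ) + 1) * ε = (((k+1 : ℕ)) : ℝ) * ε := by push_cast; ring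
      obtain ⟨q', ⟨hpos', hsupp', hsum'⟩, hlow, hload⟩ := hk ε hε (fun R j h => by
        have := hsmall R j h
        push_cast at this ⊢
        nlinarith)
      have hcR : c ∈ R := by
        by_contra h
        rw [hsupp R c h] at hRc
        exact lt_irrefl 0 hRc
      have hqRc : ((k : ℝ) + 1) * ε ≤ q R c := by
        have := hsmall R c hRc; push_cast at this; linarith
      set q'' : Finset (Fin n) → Fin n → ℝ := fun S j =>
        q' S j + (if S = R ∧ j = b then ε else 0) - (if S = R ∧ j = c then ε else 0)
        with hq''def
      have hlow' : ∀ S j, q' S j - ε ≤ q'' S j := by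
        intro S j
        simp only [hq''def]
        split_ifs <;> linarith
      refine ⟨q'', ⟨?_, ?_, ?_⟩, ?_, ?_⟩
      · -- nonneg
        intro S j
        simp only [hq''def]
        split_ifs with h1 h2 h2
        · linarith [hpos' S j]
        · linarith [hpos' S j]
        · have h3 := hlow S j
          rw [h2.1, h2.2] at h3 ⊢
          linarith [hqRc]
        · linarith [hpos' S j]
      · -- support
        intro S j hj
        have h1 : ¬(S = R ∧ j = b) := by rintro ⟨rfl, rfl⟩; exact hj hbR
        have h2 : ¬(S = R ∧ j = c) := by rintro ⟨rfl, rfl⟩; exact hj hcR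
        simp only [hq''def, if_neg h1, if_neg h2, hsupp' S j hj]
        ring
      · -- row sums
        intro S hS
        simp only [hq''def]
        rw [Finset.sum_sub_distrib, Finset.sum_add_distrib]
        by_cases hSR : S = R
        · subst hSR
          have e1 : ∑ j ∈ S, (if S = S ∧ j = b then ε else 0) = ε := by
            simp only [true_and]
            rw [Finset.sum_ite_eq' S b (fun _ => ε)]
            simp [hbR]
          have e2 : ∑ j ∈ S, (if S = S ∧ j = c then ε else 0) = ε := by
            simp only [true_and]
            rw [Finset.sum_ite_eq' S c (fun _ => ε)]
            simp [hcR]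
          rw [e1, e2, hsum' S hS]
          ring
        · have e1 : ∑ j ∈ S, (if S = R ∧ j = b then ε else 0) = 0 := by
            simp [hSR]
          have e2 : ∑ j ∈ S, (if S = R ∧ j = c then ε else 0) = 0 := by
            simp [hSR]
          rw [e1, e2, hsum' S hS]
          ring
      · -- lower bound
        intro S j
        have := hlow S j
        have := hlow' S j
        push_cast
        linarith
      · -- loads
        intro j
        have e0 : load q'' j = load q' j + (if j = b then ε else 0) - (if j = c then ε else 0) := by
          simp only [load, hq''def]
          rw [Finset.sum_sub_distrib, Finset.sum_add_distrib]
          congr 1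
          · congr 1
            by_cases hjb : j = b
            · simp only [hjb, and_true]
              rw [Finset.sum_ite_eq' Finset.univ R (fun _ => ε)]
              simp
            · simp [hjb]
          · by_cases hjc : j = c
            · simp only [hjc, and_true]
              rw [Finset.sum_ite_eq' Finset.univ R (fun _ => ε)]
              simp
            · simp [hjc]
        rw [e0, hload j]
        by_cases hjb : j = b <;> by_cases hjc : j = c <;> by_cases hja : j = a <;>
          simp [hjb, hjc, hja] <;> ring

end NCSat

namespace NCSat

variable {n : ℕ}

def Dfun (t T : Fin n → ℝ) (q : Finset (Fin n) → Fin n → ℝ) : ℝ :=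
  ∑ j, (max (t j - load q j) 0 + max (load q j - T j) 0)

lemma load_cont (j : Fin n) :
    Continuous fun q : Finset (Fin n) → Fin n → ℝ => load q j := by
  unfold load
  exact continuous_finset_sum _ fun R _ => (continuous_apply j).comp (continuous_apply R)

lemma Dfun_cont (t T : Fin n → ℝ) : Continuous (Dfun t T (n := n)) := by
  unfold Dfun
  refine continuous_finset_sum _ fun j _ => Continuous.add ?_ ?_
  · exact (continuous_const.sub (load_cont j)).max continuous_const
  · exact ((load_cont j).sub continuous_const).max continuous_const

lemma exists_min (μ : Finset (Fin n) → ℝ) (hμ : ∀ R, 0 ≤ μ R) (t T : Fin n → ℝ) :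
    ∃ q, Valid μ q ∧ ∀ q', Valid μ q' → Dfun t T q ≤ Dfun t T q' := by
  classical
  set QS : Set (Finset (Fin n) → Fin n → ℝ) := {q | Valid μ q} with hQS
  have hne : QS.Nonempty := by
    refine ⟨fun R j => if h : R.Nonempty then (if j = R.min' h then μ R else 0) else 0, ?_, ?_, ?_⟩
    · intro R j
      dsimp only
      split_ifs <;> simp [hμ R]
    · intro R j hj
      dsimp only
      split_ifs with h1 h2
      · exact absurd (h2 ▸ R.min'_mem h1) hj
      · rfl
      · rfl
    · intro R hR
      dsimp only
      simp only [dif_pos hR]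
      rw [Finset.sum_ite_eq' R (R.min' hR) (fun _ => μ R)]
      simp [R.min'_mem hR]
  have hclosed : IsClosed QS := by
    have heq : QS = ({q : Finset (Fin n) → Fin n → ℝ | ∀ R j, 0 ≤ q R j} ∩
        {q | ∀ R j, j ∉ R → q R j = 0}) ∩
        {q | ∀ R : Finset (Fin n), R.Nonempty → ∑ j ∈ R, q R j = μ R} := by
      ext q
      simp only [hQS, Set.mem_setOf_eq, Set.mem_inter_iff, Valid]
      tauto
    rw [heq]
    refine IsClosed.inter (IsClosed.inter ?_ ?_) ?_
    · rw [Set.setOf_forall]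
      refine isClosed_iInter fun R => ?_
      rw [Set.setOf_forall]
      exact isClosed_iInter fun j =>
        isClosed_le continuous_const ((continuous_apply j).comp (continuous_apply R))
    · rw [Set.setOf_forall]
      refine isClosed_iInter fun R => ?_
      rw [Set.setOf_forall]
      refine isClosed_iInter fun j => ?_
      by_cases hj : j ∈ R
      · simp [hj]
      · have : {q : Finset (Fin n) → Fin n → ℝ | j ∉ R → q R j = 0} =
            {q | q R j = 0} := by ext q; simp [hj]
        rw [this]
        exact isClosed_eq ((continuous_apply j).comp (continuous_apply R)) continuous_const
    · rw [Set.setOf_forall]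
      refine isClosed_iInter fun R => ?_
      by_cases hR : R.Nonempty
      · have : {q : Finset (Fin n) → Fin n → ℝ | R.Nonempty → ∑ j ∈ R, q R j = μ R} =
            {q | ∑ j ∈ R, q R j = μ R} := by ext q; simp [hR]
        rw [this]
        exact isClosed_eq (continuous_finset_sum _ fun j _ =>
          (continuous_apply j).comp (continuous_apply R)) continuous_const
      · simp [hR]
  have hcomp : IsCompact QS := by
    refine IsCompact.of_isClosed_subset (isCompact_univ_pi fun R =>
      isCompact_univ_pi fun j => isCompact_Icc (a := (0:ℝ)) (b := μ R)) hclosed ?_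
    intro q hq
    obtain ⟨hpos, hsupp, hsum⟩ := hq
    intro R _
    intro j _
    refine ⟨hpos R j, ?_⟩
    by_cases hjR : j ∈ R
    · have hR : R.Nonempty := ⟨j, hjR⟩
      have := hsum R hR
      calc q R j ≤ ∑ i ∈ R, q R i :=
            Finset.single_le_sum (fun i _ => hpos R i) hjR
        _ = μ R := this
    · rw [hsupp R j hjR]; exact hμ R
  obtain ⟨q, hqQS, hqmin⟩ := hcomp.exists_isMinOn hne ((Dfun_cont t T).continuousOn)
  exact ⟨q, hqQS, fun q' hq' => hqmin hq'⟩

end NCSat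

namespace NCSat

variable {n : ℕ}

lemma pert' (μ : Finset (Fin n) → ℝ) (q : Finset (Fin n) → Fin n → ℝ) (hq : Valid μ q)
    (a b : Fin n)
    (hab : Relation.ReflTransGen (fun x y => ∃ R, x ∈ R ∧ 0 < q R y) a b)
    (e : ℝ) (he : 0 < e) :
    ∃ ε q', 0 < ε ∧ ε ≤ e ∧ Valid μ q' ∧
      ∀ j, load q' j = load q j + (if j = a then ε else 0) - (if j = b then ε else 0) := by
  classical
  obtain ⟨k, hk⟩ := pert μ q hq a b hab
  set s : Finset (Finset (Fin n) × Fin n) :=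
    Finset.univ.filter (fun p => 0 < q p.1 p.2) with hs
  set δ : ℝ := if h : s.Nonempty then s.inf' h (fun p => q p.1 p.2) else 1 with hδdef
  have hδ : 0 < δ := by
    rw [hδdef]
    split_ifs with h
    · rw [Finset.lt_inf'_iff]
      intro p hp
      exact (Finset.mem_filter.mp hp).2
    · norm_num
  have hk1 : (0:ℝ) < (k:ℝ) + 1 := by positivity
  set ε : ℝ := min e (δ / ((k:ℝ) + 1)) with hεdef
  have hε : 0 < ε := lt_min he (div_pos hδ hk1)
  have hsmall : ∀ R j, 0 < q R j → (k:ℝ) * ε ≤ q R j := by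
    intro R j hpos
    have hmem : (R, j) ∈ s := Finset.mem_filter.mpr ⟨Finset.mem_univ _, hpos⟩
    have hsne : s.Nonempty := ⟨(R, j), hmem⟩
    have hδle : δ ≤ q R j := by
      rw [hδdef, dif_pos hsne]
      exact Finset.inf'_le _ hmem
    have h1 : ε ≤ δ / ((k:ℝ) + 1) := min_le_right _ _
    have h2 : (k:ℝ) * (δ / ((k:ℝ) + 1)) ≤ δ := by
      rw [mul_comm, div_mul_eq_mul_div, div_le_iff₀ hk1]
      nlinarith
    calc (k:ℝ) * ε ≤ (k:ℝ) * (δ / ((k:ℝ) + 1)) :=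
          mul_le_mul_of_nonneg_left h1 (Nat.cast_nonneg k)
      _ ≤ δ := h2
      _ ≤ q R j := hδle
  obtain ⟨q', hq', hload⟩ := hk ε hε hsmall
  exact ⟨ε, q', hε, min_le_left _ _, hq', hload⟩

lemma claim1 (μ : Finset (Fin n) → ℝ) (t T : Fin n → ℝ) (htT : ∀ j, t j ≤ T j)
    (hn1 : ∀ S : Finset (Fin n), S.Nonempty →
      ∑ j ∈ S, t j ≤
        ∑ R ∈ Finset.univ.filter (fun R : Finset (Fin n) => (R ∩ S).Nonempty), μ R)
    (q : Finset (Fin n) → Fin n → ℝ) (hq : Valid μ q)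
    (hmin : ∀ q', Valid μ q' → Dfun t T q ≤ Dfun t T q') :
    ∀ j0, t j0 ≤ load q j0 := by
  classical
  intro j0
  by_contra hL0'
  push_neg at hL0'
  set step : Fin n → Fin n → Prop := fun x y => ∃ R, x ∈ R ∧ 0 < q R y with hstep
  set A : Finset (Fin n) :=
    Finset.univ.filter (fun j => Relation.ReflTransGen step j0 j) with hA
  have hj0A : j0 ∈ A := Finset.mem_filter.mpr ⟨Finset.mem_univ _, Relation.ReflTransGen.refl⟩
  -- every reachable resource has load ≤ t
  have hAle : ∀ j ∈ A, load q j ≤ t j := by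
    intro j hjA
    by_contra hLj'
    push_neg at hLj'
    have hreach : Relation.ReflTransGen step j0 j := (Finset.mem_filter.mp hjA).2
    have hne : j0 ≠ j := by rintro rfl; linarith
    obtain ⟨ε, q', hε, hεe, hq', hload⟩ := pert' μ q hq j0 j hreach
      (min (t j0 - load q j0) (load q j - t j)) (lt_min (by linarith) (by linarith))
    have hε1 : ε ≤ t j0 - load q j0 := le_trans hεe (min_le_left _ _)
    have hε2 : ε ≤ load q j - t j := le_trans hεe (min_le_right _ _)
    have hDlt : Dfun t T q' < Dfun t T q := by
      unfold Dfun
      refine Finset.sum_lt_sum ?_ ⟨j0, Finset.mem_univ _, ?_⟩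
      · intro i _
        rw [hload i]
        by_cases hi0 : i = j0
        · subst hi0
          rw [if_pos rfl, if_neg hne]
          have h1 := htT i
          simp only [max_def]
          split_ifs <;> linarith
        · by_cases hij : i = j
          · subst hij
            rw [if_neg hi0, if_pos rfl]
            have h1 := htT i
            simp only [max_def]
            split_ifs <;> linarith
          · rw [if_neg hi0, if_neg hij]
            simp only [add_zero, sub_zero]
            exact le_rfl
      · rw [hload j0, if_pos rfl, if_neg hne]
        have h1 := htT j0
        simp only [max_def]
        split_ifs <;> linarith
    exact absurd (hmin q' hq') (not_le.mpr hDlt)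
  -- closure of A under distribution of mass
  have hclosureA : ∀ (R : Finset (Fin n)) (j : Fin n),
      (R ∩ A).Nonempty → 0 < q R j → j ∈ A := by
    intro R j hRA hpos
    obtain ⟨x, hx⟩ := hRA
    have hxR : x ∈ R := (Finset.mem_inter.mp hx).1
    have hxA : x ∈ A := (Finset.mem_inter.mp hx).2
    have hreach : Relation.ReflTransGen step j0 x := (Finset.mem_filter.mp hxA).2
    exact Finset.mem_filter.mpr ⟨Finset.mem_univ _,
      Relation.ReflTransGen.tail hreach ⟨R, hxR, hpos⟩⟩
  -- the cut inequality
  have hM : ∑ R ∈ Finset.univ.filter (fun R : Finset (Fin n) => (R ∩ A).Nonempty), μ R ≤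
      ∑ j ∈ A, load q j := by
    have e1 : ∀ R ∈ Finset.univ.filter (fun R : Finset (Fin n) => (R ∩ A).Nonempty),
        μ R = ∑ j ∈ A, q R j := by
      intro R hR
      have hRA := (Finset.mem_filter.mp hR).2
      have h1 : ∑ j ∈ A, q R j = ∑ j, q R j := by
        refine Finset.sum_subset (Finset.subset_univ A) ?_
        intro j _ hjA
        by_contra hne2
        exact hjA (hclosureA R j hRA (lt_of_le_of_ne (hq.1 R j) (Ne.symm hne2)))
      have h2 : (∑ j, q R j) = ∑ j ∈ R, q R j := by
        refine (Finset.sum_subset (Finset.subset_univ R) ?_).symm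
        intro j _ hjR
        exact hq.2.1 R j hjR
      have hRne : R.Nonempty := by
        obtain ⟨x, hx⟩ := hRA
        exact ⟨x, (Finset.mem_inter.mp hx).1⟩
      rw [h1, h2, hq.2.2 R hRne]
    calc ∑ R ∈ Finset.univ.filter (fun R : Finset (Fin n) => (R ∩ A).Nonempty), μ R
        = ∑ R ∈ Finset.univ.filter (fun R : Finset (Fin n) => (R ∩ A).Nonempty),
            ∑ j ∈ A, q R j := Finset.sum_congr rfl e1
      _ ≤ ∑ R : Finset (Fin n), ∑ j ∈ A, q R j :=
          Finset.sum_le_sum_of_subset_of_nonneg (Finset.filter_subset _ _)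
            (fun R _ _ => Finset.sum_nonneg fun j _ => hq.1 R j)
      _ = ∑ j ∈ A, load q j := by
          rw [Finset.sum_comm]
          rfl
  have hAne : A.Nonempty := ⟨j0, hj0A⟩
  have h3 := hn1 A hAne
  have h4 : ∑ j ∈ A, load q j < ∑ j ∈ A, t j :=
    Finset.sum_lt_sum (fun j hj => hAle j hj) ⟨j0, hj0A, hL0'⟩
  linarith

end NCSat

namespace NCSat

variable {n : ℕ}

lemma claim2 (μ : Finset (Fin n) → ℝ) (t T : Fin n → ℝ) (htT : ∀ j, t j ≤ T j)
    (hn2 : ∀ S : Finset (Fin n), S.Nonempty →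
      ∑ R ∈ S.powerset.filter (fun R : Finset (Fin n) => R.Nonempty), μ R ≤ ∑ j ∈ S, T j)
    (q : Finset (Fin n) → Fin n → ℝ) (hq : Valid μ q)
    (hmin : ∀ q', Valid μ q' → Dfun t T q ≤ Dfun t T q')
    (hlow : ∀ j, t j ≤ load q j) :
    ∀ j0, load q j0 ≤ T j0 := by
  classical
  intro j0
  by_contra hL0'
  push_neg at hL0'
  set step : Fin n → Fin n → Prop := fun x y => ∃ R, x ∈ R ∧ 0 < q R y with hstep
  set step2 : Fin n → Fin n → Prop := fun x y => ∃ R, y ∈ R ∧ 0 < q R x with hstep2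
  have hconv : ∀ j, Relation.ReflTransGen step2 j0 j → Relation.ReflTransGen step j j0 := by
    intro j h
    induction h with
    | refl => exact Relation.ReflTransGen.refl
    | tail _ hst ih => exact Relation.ReflTransGen.head hst ih
  set B : Finset (Fin n) :=
    Finset.univ.filter (fun j => Relation.ReflTransGen step2 j0 j) with hB
  have hj0B : j0 ∈ B := Finset.mem_filter.mpr ⟨Finset.mem_univ _, Relation.ReflTransGen.refl⟩
  -- every reachable resource has load ≥ T
  have hBge : ∀ j ∈ B, T j ≤ load q j := by
    intro j hjB
    by_contra hLj'
    push_neg at hLj'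
    have hreach : Relation.ReflTransGen step j j0 := hconv j (Finset.mem_filter.mp hjB).2
    have hne : j ≠ j0 := by rintro rfl; linarith
    obtain ⟨ε, q', hε, hεe, hq', hload⟩ := pert' μ q hq j j0 hreach
      (min (T j - load q j) (load q j0 - T j0)) (lt_min (by linarith) (by linarith))
    have hε1 : ε ≤ T j - load q j := le_trans hεe (min_le_left _ _)
    have hε2 : ε ≤ load q j0 - T j0 := le_trans hεe (min_le_right _ _)
    have hDlt : Dfun t T q' < Dfun t T q := by
      unfold Dfun
      refine Finset.sum_lt_sum ?_ ⟨j0, Finset.mem_univ _, ?_⟩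
      · intro i _
        rw [hload i]
        by_cases hij : i = j
        · subst hij
          rw [if_pos rfl, if_neg hne]
          have h1 := htT i
          have h2 := hlow i
          simp only [max_def]
          split_ifs <;> linarith
        · by_cases hi0 : i = j0
          · subst hi0
            rw [if_neg hij, if_pos rfl]
            have h1 := htT i
            have h2 := hlow i
            simp only [max_def]
            split_ifs <;> linarith
          · rw [if_neg hij, if_neg hi0]
            simp only [add_zero, sub_zero]
            exact le_rfl
      · rw [hload j0, if_neg (Ne.symm hne), if_pos rfl]
        have h1 := htT j0
        have h2 := hlow j0
        simp only [max_def]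
        split_ifs <;> linarith
    exact absurd (hmin q' hq') (not_le.mpr hDlt)
  -- closure: if mass of R reaches B then R ⊆ B
  have hclosureB : ∀ (R : Finset (Fin n)) (j : Fin n), j ∈ B → 0 < q R j → R ⊆ B := by
    intro R j hjB hpos x hxR
    have hreach : Relation.ReflTransGen step2 j0 j := (Finset.mem_filter.mp hjB).2
    exact Finset.mem_filter.mpr ⟨Finset.mem_univ _,
      Relation.ReflTransGen.tail hreach ⟨R, hxR, hpos⟩⟩
  -- the cut equality
  have hm : ∑ j ∈ B, load q j =
      ∑ R ∈ B.powerset.filter (fun R : Finset (Fin n) => R.Nonempty), μ R := by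
    have h0 : ∑ j ∈ B, load q j = ∑ R : Finset (Fin n), ∑ j ∈ B, q R j := by
      rw [Finset.sum_comm]
      rfl
    rw [h0]
    rw [← Finset.sum_subset
      (Finset.subset_univ (B.powerset.filter (fun R : Finset (Fin n) => R.Nonempty))) ?_]
    · refine Finset.sum_congr rfl ?_
      intro R hR
      have hRB : R ⊆ B := Finset.mem_powerset.mp (Finset.mem_filter.mp hR).1
      have hRne : R.Nonempty := (Finset.mem_filter.mp hR).2
      rw [← Finset.sum_subset hRB (fun j _ hjR => hq.2.1 R j hjR)]
      exact hq.2.2 R hRne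
    · intro R _ hR
      rw [Finset.mem_filter, Finset.mem_powerset] at hR
      push_neg at hR
      by_cases hsub : R ⊆ B
      · have hRe : ¬R.Nonempty := Finset.not_nonempty_iff_eq_empty.mpr (hR hsub)
        refine Finset.sum_eq_zero fun j hjB => ?_
        refine hq.2.1 R j fun hjR => hRe ⟨j, hjR⟩
      · refine Finset.sum_eq_zero fun j hjB => ?_
        by_contra hne2
        exact hsub (hclosureB R j hjB (lt_of_le_of_ne (hq.1 R j) (Ne.symm hne2)))
  have hBne : B.Nonempty := ⟨j0, hj0B⟩
  have h3 := hn2 B hBne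
  have h4 : ∑ j ∈ B, T j < ∑ j ∈ B, load q j :=
    Finset.sum_lt_sum (fun j hj => hBge j hj) ⟨j0, hj0B, hL0'⟩
  linarith

end NCSat

open scoped NNReal in
theorem normal_constraint_satisfiable' (n : ℕ)
    (μ : Finset (Fin n) → ℝ≥0) (t T : Fin n → ℝ≥0)
    (htT : ∀ j, t j ≤ T j)
    (hnormal : ∀ S : Finset (Fin n), S.Nonempty →
      (∑ j ∈ S, t j ≤
        ∑ R ∈ Finset.univ.filter (fun R : Finset (Fin n) => (R ∩ S).Nonempty), μ R) ∧
      (∑ R ∈ S.powerset.filter (fun R : Finset (Fin n) => R.Nonempty), μ R ≤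
        ∑ j ∈ S, T j)) :
    ∃ q : Finset (Fin n) → Fin n → ℝ≥0,
      (∀ R : Finset (Fin n), ∀ j : Fin n, j ∉ R → q R j = 0) ∧
      (∀ R : Finset (Fin n), R.Nonempty → ∑ j ∈ R, q R j = μ R) ∧
      (∀ j : Fin n,
        t j ≤ ∑ R : Finset (Fin n), q R j ∧ (∑ R : Finset (Fin n), q R j) ≤ T j) := by
  classical
  set μR : Finset (Fin n) → ℝ := fun R => (μ R : ℝ) with hμR
  set tR : Fin n → ℝ := fun j => (t j : ℝ) with htR
  set TR : Fin n → ℝ := fun j => (T j : ℝ) with hTR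
  have hμ : ∀ R, 0 ≤ μR R := fun R => (μ R).coe_nonneg
  have htTR : ∀ j, tR j ≤ TR j := fun j => NNReal.coe_le_coe.mpr (htT j)
  have hn1 : ∀ S : Finset (Fin n), S.Nonempty →
      ∑ j ∈ S, tR j ≤
        ∑ R ∈ Finset.univ.filter (fun R : Finset (Fin n) => (R ∩ S).Nonempty), μR R := by
    intro S hS
    have := (hnormal S hS).1
    simp only [hμR, htR]
    exact_mod_cast this
  have hn2 : ∀ S : Finset (Fin n), S.Nonempty →
      ∑ R ∈ S.powerset.filter (fun R : Finset (Fin n) => R.Nonempty), μR R ≤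
        ∑ j ∈ S, TR j := by
    intro S hS
    have := (hnormal S hS).2
    simp only [hμR, hTR]
    exact_mod_cast this
  obtain ⟨q, hq, hmin⟩ := NCSat.exists_min μR hμ tR TR
  have h1 : ∀ j, tR j ≤ NCSat.load q j := NCSat.claim1 μR tR TR htTR hn1 q hq hmin
  have h2 : ∀ j, NCSat.load q j ≤ TR j := NCSat.claim2 μR tR TR htTR hn2 q hq hmin h1
  refine ⟨fun R j => (q R j).toNNReal, ?_, ?_, ?_⟩
  · intro R j hj
    simp [hq.2.1 R j hj]
  · intro R hR
    have hco : ((∑ j ∈ R, (q R j).toNNReal : ℝ≥0) : ℝ) = ((μ R : ℝ≥0) : ℝ) := by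
      push_cast
      rw [Finset.sum_congr rfl (fun j _ => Real.coe_toNNReal _ (hq.1 R j))]
      exact hq.2.2 R hR
    exact_mod_cast hco
  · intro j
    have hco : ((∑ R : Finset (Fin n), (q R j).toNNReal : ℝ≥0) : ℝ) = NCSat.load q j := by
      push_cast
      exact Finset.sum_congr rfl (fun R _ => Real.coe_toNNReal _ (hq.1 R j))
    constructor
    · have : tR j ≤ ((∑ R : Finset (Fin n), (q R j).toNNReal : ℝ≥0) : ℝ) := by
        rw [hco]; exact h1 j
      exact_mod_cast this
    · have : ((∑ R : Finset (Fin n), (q R j).toNNReal : ℝ≥0) : ℝ) ≤ TR j := by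
        rw [hco]; exact h2 j
      exact_mod_cast this





open scoped NNReal

/-- Every normal distribution constraint is satisfiable:
given masses `μ R ≥ 0` for the nonempty types `R ⊆ {1,…,n}` and intervals
`[t j, T j] ⊆ [0,∞)`, if for every nonempty `S ⊆ {1,…,n}` both
`t_C(S) = Σ_{j∈S} t j ≤ M_C(S) = Σ {μ R : R ∩ S ≠ ∅}` and
`m_C(S) = Σ {μ R : ∅ ≠ R ⊆ S} ≤ T_C(S) = Σ_{j∈S} T j`, then there is a
distribution `q` of the mass of each nonempty type `R` among the resources of
`R` whose total load on each resource `j` lies in `[t j, T j]`. -/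
theorem normal_constraint_satisfiable (n : ℕ)
    (μ : Finset (Fin n) → ℝ≥0) (t T : Fin n → ℝ≥0)
    (htT : ∀ j, t j ≤ T j)
    (hnormal : ∀ S : Finset (Fin n), S.Nonempty →
      (∑ j ∈ S, t j ≤
        ∑ R ∈ Finset.univ.filter (fun R : Finset (Fin n) => (R ∩ S).Nonempty), μ R) ∧
      (∑ R ∈ S.powerset.filter (fun R : Finset (Fin n) => R.Nonempty), μ R ≤
        ∑ j ∈ S, T j)) :
    ∃ q : Finset (Fin n) → Fin n → ℝ≥0,
      (∀ R : Finset (Fin n), ∀ j : Fin n, j ∉ R → q R j = 0) ∧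
      (∀ R : Finset (Fin n), R.Nonempty → ∑ j ∈ R, q R j = μ R) ∧
      (∀ j : Fin n,
        t j ≤ ∑ R : Finset (Fin n), q R j ∧ (∑ R : Finset (Fin n), q R j) ≤ T j) := normal_constraint_satisfiable' n μ t T htT hnormal
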